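/- Let B⁽⁰⁾, B⁽¹⁾ be operator-collections, 0 ≤ μ' < μ, and suppose 2e·||B⁽¹⁾||_μ/(μ−μ') ≤ 1/2. Then ||exp(i·ad_{B⁽¹⁾})(B⁽⁰⁾) − B⁽⁰⁾||_{μ'} ≤ (8e/(μ−μ')²)·||B⁽⁰⁾||_μ·||B⁽¹⁾||_μ, and consequently ||exp(i·ad_{B⁽¹⁾})(B⁽⁰⁾)||_{μ'} ≤ ||B⁽⁰⁾||_μ·(1 + 8e·||B⁽¹⁾||_μ/(μ−μ')²). -/

import Mathlib

open scoped BigOperators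
set_option linter.unusedSectionVars false
open Matrix

noncomputable section

namespace QLDPC

open scoped Classical

/-- The four Pauli matrices 1, X, Y, Z. -/
def pauliMat : Fin 4 → Matrix (Fin 2) (Fin 2) ℂ
  | 0 => 1
  | 1 => !![0, 1; 1, 0]
  | 2 => !![0, -Complex.I; Complex.I, 0]
  | 3 => !![1, 0; 0, -1]

variable {Λ E : Type}

/-- Operators on the Hilbert space (ℂ²)^{⊗Λ}. -/
abbrev Op (Λ : Type) [Fintype Λ] [DecidableEq Λ] := Matrix (Λ → Fin 2) (Λ → Fin 2) ℂ

/-- The operator of a Pauli string `p : Λ → Fin 4`. -/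
def pauliOp [Fintype Λ] [DecidableEq Λ] (p : Λ → Fin 4) : Op Λ :=
  fun f g => ∏ x, pauliMat (p x) (f x) (g x)

/-- Qubit support of a Pauli string. -/
def psupp [Fintype Λ] (p : Λ → Fin 4) : Finset Λ :=
  Finset.univ.filter fun x => p x ≠ 0

/-- The operator norm (largest singular value). -/
def opNorm [Fintype Λ] [DecidableEq Λ] (A : Op Λ) : ℝ :=
  ‖Matrix.toEuclideanCLM (𝕜 := ℂ) A‖

/-- Coefficient of the Pauli string `p` in the Pauli-basis expansion of `A`. -/
def pauliCoeff [Fintype Λ] [DecidableEq Λ] (A : Op Λ) (p : Λ → Fin 4) : ℂ :=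
  Matrix.trace (pauliOp p * A) / ((2 : ℂ) ^ Fintype.card Λ)

/-- Qubit support of a general operator, via its Pauli expansion. -/
def opSupp [Fintype Λ] [DecidableEq Λ] (A : Op Λ) : Set Λ :=
  {x | ∃ p : Λ → Fin 4, pauliCoeff A p ≠ 0 ∧ p x ≠ 0}

/-- The data of a family of stabilizer checks: each check is a signed Pauli string. -/
structure Checks (Λ E : Type) where
  str : E → Λ → Fin 4
  sgn : E → Bool

variable [Fintype Λ] [DecidableEq Λ] [Fintype E]

/-- The operator of check α. -/
def checkOp (K : Checks Λ E) (α : E) : Op Λ :=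
  (if K.sgn α then (-1 : ℂ) else 1) • pauliOp (K.str α)

/-- G_α = (1 + C_α)/2. -/
def Gop (K : Checks Λ E) (α : E) : Op Λ := (2⁻¹ : ℂ) • (1 + checkOp K α)

/-- E_α = (1 - C_α)/2. -/
def Eop (K : Checks Λ E) (α : E) : Op Λ := (2⁻¹ : ℂ) • (1 - checkOp K α)

/-- The stabilizer Hamiltonian H₀ = Σ_α E_α. -/
def H0 (K : Checks Λ E) : Op Λ := ∑ α, Eop K α

/-- The stabilizer group 𝒢 generated by the checks (as a submonoid; each check squares to 1). -/
def stab (K : Checks Λ E) : Submonoid (Op Λ) :=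
  Submonoid.closure (Set.range (checkOp K))

/-- All checks pairwise commute (𝒢 abelian). -/
def CommChecks (K : Checks Λ E) : Prop := ∀ α β, Commute (checkOp K α) (checkOp K β)

/-- Check support of a qubit. -/
def suppC (K : Checks Λ E) (x : Λ) : Finset E :=
  Finset.univ.filter fun α => x ∈ psupp (K.str α)

/-- The qubit interaction graph. -/
def qubitGraph (K : Checks Λ E) : SimpleGraph Λ :=
  SimpleGraph.fromRel fun x y => ∃ α, x ∈ psupp (K.str α) ∧ y ∈ psupp (K.str α)

/-- The check interaction graph. -/
def checkGraph (K : Checks Λ E) : SimpleGraph E :=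
  SimpleGraph.fromRel fun α β => (psupp (K.str α) ∩ psupp (K.str β)).Nonempty

/-- `y` lies in the (closed) ball of radius `r` around `x` in the graph `G`. -/
def inBall {V : Type} (G : SimpleGraph V) (x y : V) (r : ℝ) : Prop :=
  G.Reachable x y ∧ (G.dist x y : ℝ) ≤ r

/-- Ball in the qubit graph. -/
def ballQ (K : Checks Λ E) (x : Λ) (r : ℝ) : Finset Λ :=
  Finset.univ.filter fun y => inBall (qubitGraph K) x y r

/-- Ball in the check graph. -/
def ballC (K : Checks Λ E) (α : E) (r : ℝ) : Finset E :=
  Finset.univ.filter fun β => inBall (checkGraph K) α β r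

/-- Ball of radius `r` around a set of checks. -/
def ballCS (K : Checks Λ E) (S : Finset E) (r : ℝ) : Finset E :=
  Finset.univ.filter fun β => ∃ α ∈ S, inBall (checkGraph K) α β r

/-- Growth of balls condition: |B_r| ≤ e^{κ r} on both graphs. -/
def BallGrowth (K : Checks Λ E) (κ : ℝ) : Prop :=
  (∀ (x : Λ) (r : ℝ), ((ballQ K x r).card : ℝ) ≤ Real.exp (κ * r)) ∧
  (∀ (α : E) (r : ℝ), ((ballC K α r).card : ℝ) ≤ Real.exp (κ * r))

/-- A finite set is connected in a graph if the induced subgraph is connected. -/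
def ConnIn {V : Type} (G : SimpleGraph V) (S : Finset V) : Prop :=
  (G.induce (S : Set V)).Connected

/-- Qubit support of a set of checks. -/
def suppSet (K : Checks Λ E) (S : Finset E) : Set Λ :=
  ↑(S.biUnion fun α => psupp (K.str α))

variable [LinearOrder E]

/-- Ordered product of operators over a finite set of check labels. -/
def ordProd (S : Finset E) (f : E → Op Λ) : Op Λ :=
  ((S.sort (· ≤ ·)).map f).prod

/-- The codespace projector P = ∏_α G_α (for commuting checks). -/
def Pmat (K : Checks Λ E) : Op Λ := ordProd Finset.univ (Gop K)

/-- The code distance: minimal support of a Pauli string p with P p P not proportional to P. -/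
def codeDist (K : Checks Λ E) : ℕ :=
  sInf ((fun p => (psupp p).card) ''
    {p : Λ → Fin 4 | ¬∃ cc : ℂ, Pmat K * pauliOp p * Pmat K = cc • Pmat K})

/-- TQO-I: Pauli strings of weight below the code distance commuting with 𝒢 belong to 𝒢. -/
def TQO1 (K : Checks Λ E) : Prop :=
  ∀ p : Λ → Fin 4, (psupp p).card < codeDist K →
    (∀ g ∈ stab K, Commute (pauliOp p) g) → pauliOp p ∈ stab K

/-- TQO-II: group elements locally supported on a small connected check set S are generated by
checks within distance ℓ|S| of S. -/
def TQO2 (K : Checks Λ E) (ℓ dtil : ℝ) : Prop :=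
  ∀ S : Finset E, ConnIn (checkGraph K) S → (S.card : ℝ) < dtil →
    ∀ g ∈ stab K, opSupp (g : Op Λ) ⊆ suppSet K S →
      (g : Op Λ) ∈ Submonoid.closure (checkOp K '' {α | ∃ β ∈ S, inBall (checkGraph K) β α (ℓ * S.card)})

/-! ### Words and operator-collections -/

/-- A word: a quadruple of pairwise disjoint subsets of the checks,
labelled (+, -, excited, ground). -/
structure Word (E : Type) where
  p : Finset E
  m : Finset E
  e : Finset E
  g : Finset E
  hpm : Disjoint p m
  hpe : Disjoint p e
  hpg : Disjoint p g
  hme : Disjoint m e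
  hmg : Disjoint m g
  heg : Disjoint e g

/-- The underlying set of the word. -/
def Word.S [DecidableEq E] (w : Word E) : Finset E := w.p ∪ w.m ∪ w.e ∪ w.g

instance : Fintype (Word E) := by
  classical
  exact Fintype.ofInjective (fun w : Word E => (w.p, w.m, w.e, w.g))
    (by
      rintro ⟨a1, a2, a3, a4, _, _, _, _, _, _⟩ ⟨b1, b2, b3, b4, _, _, _, _, _, _⟩ h
      simp only [Prod.mk.injEq] at h
      obtain ⟨h1, h2, h3, h4⟩ := h
      subst h1; subst h2; subst h3; subst h4; rfl)

/-- A word is a ghost if all components except the ground one are empty. -/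
def IsGhost (w : Word E) : Prop := w.p = ∅ ∧ w.m = ∅ ∧ w.e = ∅

/-- The empty word. -/
def emptyWord (E : Type) : Word E :=
  ⟨∅, ∅, ∅, ∅, by simp, by simp, by simp, by simp, by simp, by simp⟩

/-- Left projector assignment of a word. -/
def leftP (K : Checks Λ E) (w : Word E) (α : E) : Op Λ :=
  if α ∈ w.m ∪ w.g then Gop K α else Eop K α

/-- Right projector assignment of a word. -/
def rightP (K : Checks Λ E) (w : Word E) (α : E) : Op Λ :=
  if α ∈ w.p ∪ w.g then Gop K α else Eop K α

/-- The class 𝒳_𝐒 of operators compatible with the word 𝐒. -/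
def memClass (K : Checks Λ E) (w : Word E) (X : Op Λ) : Prop :=
  ∃ Y : Op Λ,
    (∀ α : E, (opSupp Y ∩ (psupp (K.str α) : Set Λ)).Nonempty → α ∈ w.S) ∧
    X = ordProd w.S (leftP K w) * Y * ordProd w.S (rightP K w)

/-- An operator-collection: a family (O_𝐒)_𝐒 with O_𝐒 ∈ 𝒳_𝐒. -/
def IsColl (K : Checks Λ E) (O : Word E → Op Λ) : Prop :=
  ∀ w, memClass K w (O w)

/-- The intensive word norm ‖O‖_μ of an operator-collection. -/
def wordNorm (μ : ℝ) (O : Word E → Op Λ) : ℝ :=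
  ⨆ α : E, ∑ w : Word E, (if α ∈ w.S then opNorm (O w) * Real.exp (μ * w.S.card) else 0)

/-! ### The multiplication table of words -/

/-- Labels of a check in a word: none, ground, excited, raising, lowering. -/
inductive Lbl | N | G | E | P | M
deriving DecidableEq

/-- The multiplication table of labels; `none` encodes that the product vanishes. -/
def lblMul : Lbl → Lbl → Option Lbl
  | .N, x => some x
  | .G, .N => some .G
  | .G, .G => some .G
  | .G, .E => none
  | .G, .P => none
  | .G, .M => some .M
  | .E, .N => some .E
  | .E, .G => none
  | .E, .E => some .E
  | .E, .P => some .P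
  | .E, .M => none
  | .P, .N => some .P
  | .P, .G => some .P
  | .P, .E => none
  | .P, .P => none
  | .P, .M => some .E
  | .M, .N => some .M
  | .M, .G => none
  | .M, .E => some .M
  | .M, .P => some .G
  | .M, .M => none

/-- The label of a check in a word. -/
def Word.lbl [DecidableEq E] (w : Word E) (α : E) : Lbl :=
  if α ∈ w.p then .P else if α ∈ w.m then .M else if α ∈ w.e then .E
  else if α ∈ w.g then .G else .N

/-- The product of two words is defined (the corresponding operator product does not vanish
identically by the multiplication table). -/
def MulDef (w' w : Word E) : Prop :=
  ∀ α : E, lblMul (w'.lbl α) (w.lbl α) ≠ none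

private lemma disj_aux {f : E → Option Lbl} {a b : Lbl} (hab : a ≠ b) :
    Disjoint (Finset.univ.filter fun α => f α = some a)
      (Finset.univ.filter fun α => f α = some b) := by
  rw [Finset.disjoint_left]
  intro x hx hy
  simp only [Finset.mem_filter] at hx hy
  exact hab (Option.some.inj (hx.2.symm.trans hy.2))

/-- The product word 𝐒'𝐒 (meaningful when `MulDef w' w`). -/
def wmul (w' w : Word E) : Word E where
  p := Finset.univ.filter fun α => lblMul (w'.lbl α) (w.lbl α) = some .P
  m := Finset.univ.filter fun α => lblMul (w'.lbl α) (w.lbl α) = some .M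
  e := Finset.univ.filter fun α => lblMul (w'.lbl α) (w.lbl α) = some .E
  g := Finset.univ.filter fun α => lblMul (w'.lbl α) (w.lbl α) = some .G
  hpm := disj_aux (by decide)
  hpe := disj_aux (by decide)
  hpg := disj_aux (by decide)
  hme := disj_aux (by decide)
  hmg := disj_aux (by decide)
  heg := disj_aux (by decide)

/-- The commutator of two operator-collections. -/
def collComm (O O' : Word E → Op Λ) : Word E → Op Λ := fun w =>
  ∑ w1 : Word E, ∑ w2 : Word E,
    if MulDef w1 w2 ∧ wmul w1 w2 = w ∧ (w1.S ∩ w2.S).Nonempty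
    then O w1 * O' w2 - O' w1 * O w2 else 0

/-- Iterated adjoint action ad_{B_k}⋯ad_{B_1}(B_0) of operator-collections. -/
def chainAd (B : ℕ → Word E → Op Λ) : ℕ → Word E → Op Λ
  | 0 => B 0
  | k + 1 => collComm (B (k + 1)) (chainAd B k)

/-- exp(i ad_A)(B) for operator-collections, defined componentwise. -/
def expAd (A B : Word E → Op Λ) : Word E → Op Λ := fun w =>
  ∑' k : ℕ, ((Complex.I ^ k / (k.factorial : ℂ)) • ((fun C => collComm A C)^[k] B) w)

/-! ### Sequences of words -/

/-- The running products 𝐒'_i of a sequence of words. -/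
def sprime (σ : ℕ → Word E) : ℕ → Word E
  | 0 => σ 0
  | i + 1 => wmul (σ (i + 1)) (sprime σ i)

/-- The running products with ghost words skipped. -/
def sprimeG (σ : ℕ → Word E) : ℕ → Word E
  | 0 => σ 0
  | i + 1 => if IsGhost (σ (i + 1)) then sprimeG σ i else wmul (σ (i + 1)) (sprimeG σ i)

/-- Extend a finite sequence of words by the empty word. -/
def extend {k : ℕ} (σ : Fin (k + 1) → Word E) : ℕ → Word E :=
  fun i => if h : i < k + 1 then σ ⟨i, h⟩ else emptyWord E

/-! ### Pauli norms -/

/-- Size of a minimal connected set of qubits containing the support of `p`. -/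
def mSize (K : Checks Λ E) (p : Λ → Fin 4) : ℕ :=
  sInf {n | ∃ T : Finset Λ, ConnIn (qubitGraph K) T ∧ psupp p ⊆ T ∧ T.card = n}

/-- The intensive Pauli norm of an operator given by Pauli coefficients `c`. -/
def pauliNormC (K : Checks Λ E) (μ : ℝ) (c : (Λ → Fin 4) → ℂ) : ℝ :=
  ⨆ x : Λ, ∑ p : Λ → Fin 4, (if p x ≠ 0 then ‖c p‖ * Real.exp (μ * (mSize K p : ℝ)) else 0)

/-- The intensive Pauli norm of an operator. -/
def pauliNormOp (K : Checks Λ E) (μ : ℝ) (A : Op Λ) : ℝ :=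
  pauliNormC K μ (pauliCoeff A)

/-- Diameter of the qubit graph. -/
def diam (K : Checks Λ E) : ℕ :=
  Finset.univ.sup fun pr : Λ × Λ => (qubitGraph K).dist pr.1 pr.2

/-- The spectral projector of a Hermitian matrix onto the eigenvalues in [-δ, δ]. -/
def spectralProjLE {n : Type} [Fintype n] [DecidableEq n] {A : Matrix n n ℂ}
    (hA : A.IsHermitian) (δ : ℝ) : Matrix n n ℂ :=
  (hA.eigenvectorUnitary : Matrix n n ℂ) *
    Matrix.diagonal (fun i => if |hA.eigenvalues i| ≤ δ then (1 : ℂ) else 0) *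
    star (hA.eigenvectorUnitary : Matrix n n ℂ)


set_option maxHeartbeats 3000000
set_option synthInstance.maxHeartbeats 400000
/-! ### Auxiliary lemmas -/

section AuxNorm
variable {Λ : Type} [Fintype Λ] [DecidableEq Λ]

lemma opNorm_nonneg (A : Op Λ) : 0 ≤ opNorm A := norm_nonneg _

lemma opNorm_zero : opNorm (0 : Op Λ) = 0 := by
  simp [opNorm]

lemma opNorm_mul_le (A B : Op Λ) : opNorm (A * B) ≤ opNorm A * opNorm B := by
  rw [opNorm, opNorm, opNorm, _root_.map_mul]
  exact norm_mul_le _ _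

lemma opNorm_sub_le (A B : Op Λ) : opNorm (A - B) ≤ opNorm A + opNorm B := by
  rw [opNorm, opNorm, opNorm, map_sub]
  exact norm_sub_le _ _

lemma opNorm_smul (c : ℂ) (A : Op Λ) : opNorm (c • A) = ‖c‖ * opNorm A := by
  rw [opNorm, opNorm, _root_.map_smul]
  exact norm_smul c (Matrix.toEuclideanCLM (𝕜 := ℂ) A)

lemma opNorm_sum_le {ι : Type*} (s : Finset ι) (f : ι → Op Λ) :
    opNorm (∑ i ∈ s, f i) ≤ ∑ i ∈ s, opNorm (f i) := by
  rw [opNorm, _root_.map_sum]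
  exact (norm_sum_le _ _).trans (le_of_eq rfl)

end AuxNorm

section AuxWord
variable {Λ E : Type} [Fintype Λ] [DecidableEq Λ] [Fintype E] [LinearOrder E]

lemma opNorm_add_le (A B : Op Λ) : opNorm (A + B) ≤ opNorm A + opNorm B := by
  rw [opNorm, opNorm, opNorm, _root_.map_add]
  exact norm_add_le _ _

/-- The summand of the word norm at a given check. -/
def Fn (μ : ℝ) (O : Word E → Op Λ) (α : E) : ℝ :=
  ∑ w : Word E, if α ∈ w.S then opNorm (O w) * Real.exp (μ * w.S.card) else 0

lemma wordNorm_eq (μ : ℝ) (O : Word E → Op Λ) : wordNorm μ O = ⨆ α : E, Fn μ O α := rfl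

lemma Fn_nonneg (μ : ℝ) (O : Word E → Op Λ) (α : E) : 0 ≤ Fn μ O α :=
  Finset.sum_nonneg fun w _ => by
    by_cases h : α ∈ w.S
    · simp only [if_pos h]
      exact mul_nonneg (opNorm_nonneg _) (Real.exp_pos _).le
    · simp [h]

lemma Fn_le_wordNorm (μ : ℝ) (O : Word E → Op Λ) (α : E) : Fn μ O α ≤ wordNorm μ O := by
  rw [wordNorm_eq]
  exact le_ciSup (Set.Finite.bddAbove (Set.finite_range _)) α

lemma wordNorm_le_of {μ : ℝ} {O : Word E → Op Λ} {M : ℝ} (hM : 0 ≤ M)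
    (h : ∀ α, Fn μ O α ≤ M) : wordNorm μ O ≤ M := by
  rw [wordNorm_eq]
  rcases isEmpty_or_nonempty E with hE | hE
  · rw [Real.iSup_of_isEmpty]; exact hM
  · exact ciSup_le h

lemma wordNorm_nonneg' (μ : ℝ) (O : Word E → Op Λ) : 0 ≤ wordNorm μ O := by
  rcases isEmpty_or_nonempty E with hE | hE
  · rw [wordNorm_eq, Real.iSup_of_isEmpty]
  · exact le_trans (Fn_nonneg μ O (Classical.arbitrary E)) (Fn_le_wordNorm μ O _)

lemma Fn_mono {μ' μ : ℝ} (hμ : μ' ≤ μ) (O : Word E → Op Λ) (α : E) :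
    Fn μ' O α ≤ Fn μ O α := by
  refine Finset.sum_le_sum fun w _ => ?_
  by_cases h : α ∈ w.S
  · simp only [if_pos h]
    exact mul_le_mul_of_nonneg_left
      (Real.exp_le_exp.2 (mul_le_mul_of_nonneg_right hμ (Nat.cast_nonneg _)))
      (opNorm_nonneg _)
  · simp [h]

lemma wordNorm_mono {μ' μ : ℝ} (hμ : μ' ≤ μ) (O : Word E → Op Λ) :
    wordNorm μ' O ≤ wordNorm μ O :=
  wordNorm_le_of (wordNorm_nonneg' μ O) fun α =>
    (Fn_mono hμ O α).trans (Fn_le_wordNorm μ O α)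

lemma opNorm_le_Fn {μ : ℝ} (hμ : 0 ≤ μ) (O : Word E → Op Λ) {w : Word E} {α : E}
    (hα : α ∈ w.S) : opNorm (O w) ≤ Fn μ O α := by
  have h1 : opNorm (O w) ≤ opNorm (O w) * Real.exp (μ * w.S.card) :=
    le_mul_of_one_le_right (opNorm_nonneg _)
      (Real.one_le_exp (mul_nonneg hμ (Nat.cast_nonneg _)))
  refine h1.trans ?_
  have := Finset.single_le_sum (f := fun w' : Word E =>
      if α ∈ w'.S then opNorm (O w') * Real.exp (μ * w'.S.card) else 0)
    (fun w' _ => by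
      by_cases h : α ∈ w'.S
      · simp only [if_pos h]; exact mul_nonneg (opNorm_nonneg _) (Real.exp_pos _).le
      · simp [h]) (Finset.mem_univ w)
  simpa [Fn, if_pos hα] using this

lemma opNorm_le_wordNorm {μ : ℝ} (hμ : 0 ≤ μ) (O : Word E → Op Λ) {w : Word E}
    (hw : w.S.Nonempty) : opNorm (O w) ≤ wordNorm μ O := by
  obtain ⟨α, hα⟩ := hw
  exact (opNorm_le_Fn hμ O hα).trans (Fn_le_wordNorm μ O α)

lemma wordNorm_add_le (μ : ℝ) (X Y : Word E → Op Λ) :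
    wordNorm μ (fun w => X w + Y w) ≤ wordNorm μ X + wordNorm μ Y := by
  refine wordNorm_le_of (add_nonneg (wordNorm_nonneg' μ X) (wordNorm_nonneg' μ Y)) fun α => ?_
  have : Fn μ (fun w => X w + Y w) α ≤ Fn μ X α + Fn μ Y α := by
    rw [Fn, Fn, Fn, ← Finset.sum_add_distrib]
    refine Finset.sum_le_sum fun w _ => ?_
    by_cases h : α ∈ w.S
    · simp only [if_pos h]
      rw [← add_mul]
      exact mul_le_mul_of_nonneg_right (opNorm_add_le _ _) (Real.exp_pos _).le
    · simp [h]
  exact this.trans (add_le_add (Fn_le_wordNorm μ X α) (Fn_le_wordNorm μ Y α))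

end AuxWord

section AuxLbl
variable {E : Type} [Fintype E] [LinearOrder E]

lemma mem_S_iff_lbl (w : Word E) (α : E) : α ∈ w.S ↔ w.lbl α ≠ Lbl.N := by
  unfold Word.S Word.lbl
  by_cases hp : α ∈ w.p <;> by_cases hm : α ∈ w.m <;> by_cases he : α ∈ w.e <;>
    by_cases hg : α ∈ w.g <;> simp [hp, hm, he, hg, Finset.mem_union]

lemma mem_wmul_S {w1 w2 : Word E} {α : E} :
    α ∈ (wmul w1 w2).S ↔
      (lblMul (w1.lbl α) (w2.lbl α) = some Lbl.P ∨
       lblMul (w1.lbl α) (w2.lbl α) = some Lbl.M ∨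
       lblMul (w1.lbl α) (w2.lbl α) = some Lbl.E ∨
       lblMul (w1.lbl α) (w2.lbl α) = some Lbl.G) := by
  unfold wmul Word.S
  simp [Finset.mem_union, Finset.mem_filter]

lemma mem_or_of_mem_wmul_S {w1 w2 : Word E} {α : E} (h : α ∈ (wmul w1 w2).S) :
    α ∈ w1.S ∨ α ∈ w2.S := by
  rw [mem_wmul_S] at h
  rw [mem_S_iff_lbl, mem_S_iff_lbl]
  by_contra hc
  push_neg at hc
  obtain ⟨h1, h2⟩ := hc
  rw [h1, h2] at h
  simp [lblMul] at h

lemma wmul_S_card_le (w1 w2 : Word E) :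
    (wmul w1 w2).S.card ≤ w1.S.card + w2.S.card := by
  refine le_trans (Finset.card_le_card fun α hα => ?_) (Finset.card_union_le _ _)
  rw [Finset.mem_union]
  exact mem_or_of_mem_wmul_S hα

lemma mem_wmul_S_of_mem_both {w1 w2 : Word E} {β : E} (hmd : MulDef w1 w2)
    (h1 : β ∈ w1.S) (h2 : β ∈ w2.S) : β ∈ (wmul w1 w2).S := by
  rw [mem_S_iff_lbl] at h1 h2
  have hne := hmd β
  rw [mem_wmul_S]
  cases hl1 : w1.lbl β <;> cases hl2 : w2.lbl β <;>
    rw [hl1] at h1 hne <;> rw [hl2] at h2 hne <;> simp_all [lblMul]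

lemma wmul_S_nonempty {w1 w2 : Word E} (hmd : MulDef w1 w2)
    (hne : (w1.S ∩ w2.S).Nonempty) : (wmul w1 w2).S.Nonempty := by
  obtain ⟨β, hβ⟩ := hne
  rw [Finset.mem_inter] at hβ
  exact ⟨β, mem_wmul_S_of_mem_both hmd hβ.1 hβ.2⟩

end AuxLbl

section AuxComm
variable {Λ E : Type} [Fintype Λ] [DecidableEq Λ] [Fintype E] [LinearOrder E]

lemma collComm_eq_zero_of_S_empty (A B : Word E → Op Λ) {w : Word E} (hw : w.S = ∅) :
    collComm A B w = 0 := by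
  unfold collComm
  refine Finset.sum_eq_zero fun w1 _ => Finset.sum_eq_zero fun w2 _ => ?_
  rw [if_neg]
  rintro ⟨hmd, heq, hne⟩
  have := wmul_S_nonempty hmd hne
  rw [heq, hw] at this
  exact this.ne_empty rfl

end AuxComm

section AuxAnalytic

lemma mul_exp_neg_le_inv (x : ℝ) : x * Real.exp (-x) ≤ Real.exp (-1) := by
  have h1 : x ≤ Real.exp (x - 1) := by
    have := Real.add_one_le_exp (x - 1)
    linarith
  calc x * Real.exp (-x) ≤ Real.exp (x - 1) * Real.exp (-x) :=
        mul_le_mul_of_nonneg_right h1 (Real.exp_pos _).le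
    _ = Real.exp (-1) := by rw [← Real.exp_add]; ring_nf

lemma sq_mul_exp_neg_le {x : ℝ} (hx : 0 ≤ x) : x ^ 2 * Real.exp (-x) ≤ 4 * Real.exp (-2) := by
  have h1 : x / 2 ≤ Real.exp (x / 2 - 1) := by
    have := Real.add_one_le_exp (x / 2 - 1)
    linarith
  have h2 : x ^ 2 ≤ 4 * Real.exp (x - 2) := by
    have h := mul_le_mul h1 h1 (by linarith) (Real.exp_pos _).le
    rw [← Real.exp_add, show x / 2 - 1 + (x / 2 - 1) = x - 2 by ring] at h
    nlinarith [h]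
  calc x ^ 2 * Real.exp (-x) ≤ 4 * Real.exp (x - 2) * Real.exp (-x) :=
        mul_le_mul_of_nonneg_right h2 (Real.exp_pos _).le
    _ = 4 * Real.exp (-2) := by rw [mul_assoc, ← Real.exp_add]; ring_nf

/-- Bound (i): t e^{-δt} ≤ 1/(e δ) for all t, δ > 0. -/
lemma factor_bound_one {δ : ℝ} (hδ : 0 < δ) (t : ℝ) :
    t * Real.exp (-(δ * t)) ≤ 1 / (Real.exp 1 * δ) := by
  have hkey : δ * (t * Real.exp (-(δ * t))) ≤ Real.exp (-1) := by
    calc δ * (t * Real.exp (-(δ * t))) = (δ * t) * Real.exp (-(δ * t)) := by ring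
      _ ≤ Real.exp (-1) := mul_exp_neg_le_inv _
  have hepos : (0:ℝ) < Real.exp 1 := Real.exp_pos 1
  rw [le_div_iff₀ (by positivity : (0:ℝ) < Real.exp 1 * δ)]
  have h3 := mul_le_mul_of_nonneg_left hkey hepos.le
  calc t * Real.exp (-(δ * t)) * (Real.exp 1 * δ)
      = Real.exp 1 * (δ * (t * Real.exp (-(δ * t)))) := by ring
    _ ≤ Real.exp 1 * Real.exp (-1) := h3
    _ = 1 := by rw [← Real.exp_add]; norm_num

/-- Bound (ii): t e^{-δt} ≤ 4/(e² δ²) for t ≥ 1, δ > 0. -/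
lemma factor_bound_two {δ : ℝ} (hδ : 0 < δ) {t : ℝ} (ht : 1 ≤ t) :
    t * Real.exp (-(δ * t)) ≤ 4 / (Real.exp 1 ^ 2 * δ ^ 2) := by
  have ht0 : 0 ≤ t := by linarith
  have h1 : t * Real.exp (-(δ * t)) ≤ t ^ 2 * Real.exp (-(δ * t)) := by
    have : t ≤ t ^ 2 := by nlinarith
    exact mul_le_mul_of_nonneg_right this (Real.exp_pos _).le
  have h2 : (δ * t) ^ 2 * Real.exp (-(δ * t)) ≤ 4 * Real.exp (-2) :=
    sq_mul_exp_neg_le (by positivity)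
  have hδ2 : (0:ℝ) < δ ^ 2 := by positivity
  have h3 : t ^ 2 * Real.exp (-(δ * t)) = ((δ * t) ^ 2 * Real.exp (-(δ * t))) / δ ^ 2 := by
    field_simp
  rw [h3] at h1
  refine h1.trans ?_
  have h4 : ((δ * t) ^ 2 * Real.exp (-(δ * t))) / δ ^ 2 ≤ (4 * Real.exp (-2)) / δ ^ 2 := by
    gcongr
  refine h4.trans (le_of_eq ?_)
  rw [Real.exp_neg]
  rw [show Real.exp 2 = Real.exp 1 ^ 2 by rw [← Real.exp_nat_mul]; norm_num]
  field_simp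

/-- k^k ≤ e^k k! -/
lemma pow_self_le_exp_factorial : ∀ k : ℕ, (k : ℝ) ^ k ≤ Real.exp 1 ^ k * k.factorial := by
  intro k
  induction k with
  | zero => simp
  | succ k ih =>
    have hsub : ((k:ℝ) + 1) ^ k ≤ Real.exp 1 * (k:ℝ) ^ k := by
      rcases Nat.eq_zero_or_pos k with hk | hk
      · subst hk; simp [Real.one_le_exp]
      · have hkpos : (0:ℝ) < k := by exact_mod_cast hk
        have h1 : (k:ℝ) + 1 = (k:ℝ) * (1 + 1/(k:ℝ)) := by field_simp
        have h2 : (1 + 1/(k:ℝ)) ^ k ≤ Real.exp 1 := by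
          have hle : 1 + 1/(k:ℝ) ≤ Real.exp (1/(k:ℝ)) := by
            have := Real.add_one_le_exp (1/(k:ℝ)); linarith
          calc (1 + 1/(k:ℝ)) ^ k ≤ Real.exp (1/(k:ℝ)) ^ k :=
                pow_le_pow_left₀ (by positivity) hle k
            _ = Real.exp ((1/(k:ℝ)) * k) := by rw [← Real.exp_nat_mul]; ring_nf
            _ = Real.exp 1 := by rw [one_div, inv_mul_cancel₀ (ne_of_gt hkpos)]
        calc ((k:ℝ) + 1) ^ k = (k:ℝ) ^ k * (1 + 1/(k:ℝ)) ^ k := by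
              rw [h1, mul_pow]
          _ ≤ (k:ℝ) ^ k * Real.exp 1 :=
              mul_le_mul_of_nonneg_left h2 (by positivity)
          _ = Real.exp 1 * (k:ℝ) ^ k := by ring
    have hcast : ((k+1 : ℕ) : ℝ) = (k:ℝ) + 1 := by push_cast; ring
    calc ((k+1:ℕ):ℝ) ^ (k+1) = ((k:ℝ) + 1) ^ k * ((k:ℝ) + 1) := by
          rw [hcast, pow_succ]
      _ ≤ (Real.exp 1 * (k:ℝ) ^ k) * ((k:ℝ) + 1) :=
          mul_le_mul_of_nonneg_right hsub (by positivity)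
      _ ≤ (Real.exp 1 * (Real.exp 1 ^ k * k.factorial)) * ((k:ℝ) + 1) := by
          refine mul_le_mul_of_nonneg_right (mul_le_mul_of_nonneg_left ih (Real.exp_pos _).le)
            (by positivity)
      _ = Real.exp 1 ^ (k+1) * ((k.factorial : ℝ) * ((k:ℝ)+1)) := by ring
      _ = Real.exp 1 ^ (k+1) * (k+1).factorial := by
          rw [Nat.factorial_succ]; push_cast; ring

end AuxAnalytic

section AuxMaster
variable {Λ E : Type} [Fintype Λ] [DecidableEq Λ] [Fintype E] [LinearOrder E]

lemma inner_sum_le (ν : ℝ) (O : Word E → Op Λ) (T : Finset E) :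
    ∑ w : Word E, (if (T ∩ w.S).Nonempty then opNorm (O w) * Real.exp (ν * w.S.card) else 0)
      ≤ T.card * wordNorm ν O := by
  have hterm : ∀ w : Word E, (0:ℝ) ≤ opNorm (O w) * Real.exp (ν * w.S.card) :=
    fun w => mul_nonneg (opNorm_nonneg _) (Real.exp_pos _).le
  have step : ∀ w : Word E,
      (if (T ∩ w.S).Nonempty then opNorm (O w) * Real.exp (ν * w.S.card) else 0)
        ≤ ∑ β ∈ T, (if β ∈ w.S then opNorm (O w) * Real.exp (ν * w.S.card) else 0) := by
    intro w
    by_cases h : (T ∩ w.S).Nonempty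
    · obtain ⟨β, hβ⟩ := h
      rw [Finset.mem_inter] at hβ
      rw [if_pos ⟨β, Finset.mem_inter.2 hβ⟩]
      have hs := Finset.single_le_sum (f := fun β : E =>
          if β ∈ w.S then opNorm (O w) * Real.exp (ν * w.S.card) else 0)
        (fun β _ => by by_cases hb : β ∈ w.S <;> simp [hb, hterm w]) hβ.1
      simpa [hβ.2] using hs
    · rw [if_neg h]
      exact Finset.sum_nonneg fun β _ => by by_cases hb : β ∈ w.S <;> simp [hb, hterm w]
  calc ∑ w : Word E, (if (T ∩ w.S).Nonempty then opNorm (O w) * Real.exp (ν * w.S.card) else 0)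
      ≤ ∑ w : Word E, ∑ β ∈ T,
          (if β ∈ w.S then opNorm (O w) * Real.exp (ν * w.S.card) else 0) :=
        Finset.sum_le_sum fun w _ => step w
    _ = ∑ β ∈ T, ∑ w : Word E,
          (if β ∈ w.S then opNorm (O w) * Real.exp (ν * w.S.card) else 0) := Finset.sum_comm
    _ = ∑ β ∈ T, Fn ν O β := rfl
    _ ≤ ∑ β ∈ T, wordNorm ν O := Finset.sum_le_sum fun β _ => Fn_le_wordNorm ν O β
    _ = T.card * wordNorm ν O := by rw [Finset.sum_const, nsmul_eq_mul]

lemma Tbound (A B : Word E → Op Λ) {ν' ν M : ℝ} (h0 : 0 ≤ ν') (hν : ν' < ν)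
    (hM : ∀ t : ℕ, 1 ≤ t → (t:ℝ) * Real.exp (-((ν - ν') * t)) ≤ M) (α : E) :
    ∑ x : Word E, ∑ y : Word E,
      (if α ∈ x.S ∧ (x.S ∩ y.S).Nonempty then
        (opNorm (A x) * opNorm (B y) + opNorm (B x) * opNorm (A y)) *
          (Real.exp (ν' * x.S.card) * Real.exp (ν' * y.S.card)) else 0)
      ≤ 2 * M * (wordNorm ν A * wordNorm ν B) := by
  set NA := wordNorm ν A with hNAdef
  set NB := wordNorm ν B with hNBdef
  have hNA : 0 ≤ NA := wordNorm_nonneg' ν A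
  have hNB : 0 ≤ NB := wordNorm_nonneg' ν B
  have hMpos : 0 ≤ M := by
    have h1 := hM 1 le_rfl
    rw [Nat.cast_one, one_mul] at h1
    have h2 := Real.exp_pos (-((ν - ν') * 1))
    linarith
  have hx : ∀ x : Word E,
      (∑ y : Word E, (if α ∈ x.S ∧ (x.S ∩ y.S).Nonempty then
        (opNorm (A x) * opNorm (B y) + opNorm (B x) * opNorm (A y)) *
          (Real.exp (ν' * x.S.card) * Real.exp (ν' * y.S.card)) else 0))
        ≤ (if α ∈ x.S then
            M * Real.exp (ν * x.S.card) * (opNorm (A x) * NB + opNorm (B x) * NA) else 0) := by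
    intro x
    by_cases hαx : α ∈ x.S
    · simp only [hαx, true_and, if_pos]
      have hsplit : ∀ y : Word E,
          (if (x.S ∩ y.S).Nonempty then
            (opNorm (A x) * opNorm (B y) + opNorm (B x) * opNorm (A y)) *
              (Real.exp (ν' * x.S.card) * Real.exp (ν' * y.S.card)) else 0)
          ≤ opNorm (A x) * Real.exp (ν' * x.S.card) *
              (if (x.S ∩ y.S).Nonempty then opNorm (B y) * Real.exp (ν * y.S.card) else 0)
            + opNorm (B x) * Real.exp (ν' * x.S.card) *
              (if (x.S ∩ y.S).Nonempty then opNorm (A y) * Real.exp (ν * y.S.card) else 0) := by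
        intro y
        by_cases hy : (x.S ∩ y.S).Nonempty
        · simp only [if_pos hy]
          have hee : Real.exp (ν' * y.S.card) ≤ Real.exp (ν * y.S.card) :=
            Real.exp_le_exp.2 (mul_le_mul_of_nonneg_right hν.le (Nat.cast_nonneg _))
          have h1 : (0:ℝ) ≤ opNorm (A x) * Real.exp (ν' * x.S.card) :=
            mul_nonneg (opNorm_nonneg _) (Real.exp_pos _).le
          have h2 : (0:ℝ) ≤ opNorm (B x) * Real.exp (ν' * x.S.card) :=
            mul_nonneg (opNorm_nonneg _) (Real.exp_pos _).le
          nlinarith [opNorm_nonneg (A y), opNorm_nonneg (B y), opNorm_nonneg (A x),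
            opNorm_nonneg (B x), Real.exp_pos (ν' * (x.S.card:ℝ)), Real.exp_pos (ν' * (y.S.card:ℝ)),
            mul_le_mul_of_nonneg_left hee (opNorm_nonneg (B y)),
            mul_le_mul_of_nonneg_left hee (opNorm_nonneg (A y))]
        · simp [hy]
      have hsum := Finset.sum_le_sum fun y (_ : y ∈ Finset.univ) => hsplit y
      rw [Finset.sum_add_distrib, ← Finset.mul_sum, ← Finset.mul_sum] at hsum
      have hinnerB := inner_sum_le (Λ := Λ) ν B x.S
      have hinnerA := inner_sum_le (Λ := Λ) ν A x.S
      have hcard : 1 ≤ x.S.card := Finset.card_pos.2 ⟨α, hαx⟩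
      have hfac : (x.S.card : ℝ) * Real.exp (ν' * x.S.card) ≤ M * Real.exp (ν * x.S.card) := by
        have hMt := hM x.S.card hcard
        have : Real.exp (ν' * x.S.card) =
            Real.exp (-((ν - ν') * x.S.card)) * Real.exp (ν * x.S.card) := by
          rw [← Real.exp_add]; ring_nf
        rw [this, ← mul_assoc]
        exact mul_le_mul_of_nonneg_right hMt (Real.exp_pos _).le
      calc (∑ y : Word E, (if (x.S ∩ y.S).Nonempty then
              (opNorm (A x) * opNorm (B y) + opNorm (B x) * opNorm (A y)) *
                (Real.exp (ν' * x.S.card) * Real.exp (ν' * y.S.card)) else 0))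
          ≤ opNorm (A x) * Real.exp (ν' * x.S.card) *
              (∑ y : Word E, (if (x.S ∩ y.S).Nonempty then
                opNorm (B y) * Real.exp (ν * y.S.card) else 0))
            + opNorm (B x) * Real.exp (ν' * x.S.card) *
              (∑ y : Word E, (if (x.S ∩ y.S).Nonempty then
                opNorm (A y) * Real.exp (ν * y.S.card) else 0)) := hsum
        _ ≤ opNorm (A x) * Real.exp (ν' * x.S.card) * (x.S.card * NB)
            + opNorm (B x) * Real.exp (ν' * x.S.card) * (x.S.card * NA) := by
            refine add_le_add ?_ ?_ <;>
              exact mul_le_mul_of_nonneg_left (by assumption)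
                (mul_nonneg (opNorm_nonneg _) (Real.exp_pos _).le)
        _ = ((x.S.card : ℝ) * Real.exp (ν' * x.S.card)) *
              (opNorm (A x) * NB + opNorm (B x) * NA) := by ring
        _ ≤ (M * Real.exp (ν * x.S.card)) * (opNorm (A x) * NB + opNorm (B x) * NA) := by
            refine mul_le_mul_of_nonneg_right hfac ?_
            have := opNorm_nonneg (A x); have := opNorm_nonneg (B x); nlinarith
        _ = M * Real.exp (ν * x.S.card) * (opNorm (A x) * NB + opNorm (B x) * NA) := by ring
    · refine le_of_eq ?_
      rw [if_neg hαx]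
      exact Finset.sum_eq_zero fun y _ => if_neg (fun h => hαx h.1)
  have htot := Finset.sum_le_sum fun x (_ : x ∈ Finset.univ) => hx x
  refine htot.trans ?_
  have hsplit2 : ∀ x : Word E,
      (if α ∈ x.S then M * Real.exp (ν * x.S.card) *
          (opNorm (A x) * NB + opNorm (B x) * NA) else 0)
        = M * NB * (if α ∈ x.S then opNorm (A x) * Real.exp (ν * x.S.card) else 0)
          + M * NA * (if α ∈ x.S then opNorm (B x) * Real.exp (ν * x.S.card) else 0) := by
    intro x
    by_cases hαx : α ∈ x.S <;> simp [hαx] <;> ring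
  have e1 : ∑ x : Word E, (if α ∈ x.S then M * Real.exp (ν * x.S.card) *
          (opNorm (A x) * NB + opNorm (B x) * NA) else 0)
      = M * NB * Fn ν A α + M * NA * Fn ν B α := by
    simp only [Fn]
    rw [Finset.mul_sum, Finset.mul_sum, ← Finset.sum_add_distrib]
    exact Finset.sum_congr rfl fun x _ => hsplit2 x
  refine le_trans (le_of_eq e1) ?_
  have l1 : M * NB * Fn ν A α ≤ M * NB * NA :=
    mul_le_mul_of_nonneg_left (Fn_le_wordNorm ν A α) (mul_nonneg hMpos hNB)
  have l2 : M * NA * Fn ν B α ≤ M * NA * NB :=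
    mul_le_mul_of_nonneg_left (Fn_le_wordNorm ν B α) (mul_nonneg hMpos hNA)
  calc M * NB * Fn ν A α + M * NA * Fn ν B α ≤ M * NB * NA + M * NA * NB := add_le_add l1 l2
    _ = 2 * M * (NA * NB) := by ring


/-- The weight function in the commutator bound. -/
def cfun (A B : Word E → Op Λ) (ν' : ℝ) (x y : Word E) : ℝ :=
  (opNorm (A x) * opNorm (B y) + opNorm (B x) * opNorm (A y)) *
    (Real.exp (ν' * x.S.card) * Real.exp (ν' * y.S.card))

lemma cfun_nonneg (A B : Word E → Op Λ) (ν' : ℝ) (x y : Word E) : 0 ≤ cfun A B ν' x y := by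
  unfold cfun
  have := opNorm_nonneg (A x); have := opNorm_nonneg (B x)
  have := opNorm_nonneg (A y); have := opNorm_nonneg (B y)
  positivity

lemma Tbound' (A B : Word E → Op Λ) {ν' ν M : ℝ} (h0 : 0 ≤ ν') (hν : ν' < ν)
    (hM : ∀ t : ℕ, 1 ≤ t → (t:ℝ) * Real.exp (-((ν - ν') * t)) ≤ M) (α : E) :
    ∑ x : Word E, ∑ y : Word E,
      (if α ∈ x.S ∧ (x.S ∩ y.S).Nonempty then cfun A B ν' x y else 0)
      ≤ 2 * M * (wordNorm ν A * wordNorm ν B) := by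
  simp only [cfun]
  exact Tbound A B h0 hν hM α

lemma ite_le_ite_add_ite {c : ℝ} (hc : 0 ≤ c) {P Q R : Prop} [Decidable P] [Decidable Q]
    [Decidable R] (h : P → Q ∨ R) :
    (if P then c else 0) ≤ (if Q then c else 0) + (if R then c else 0) := by
  have hq : (0:ℝ) ≤ (if Q then c else 0) := by by_cases hh : Q <;> simp [hh, hc]
  have hr : (0:ℝ) ≤ (if R then c else 0) := by by_cases hh : R <;> simp [hh, hc]
  by_cases hP : P
  · rcases h hP with hQ | hR
    · rw [if_pos hP, if_pos hQ]; linarith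
    · rw [if_pos hP, if_pos hR]; linarith
  · rw [if_neg hP]; linarith

lemma collapse (w1 w2 : Word E) (α : E) (c : ℝ) :
    (∑ w : Word E,
      if (MulDef w1 w2 ∧ wmul w1 w2 = w ∧ (w1.S ∩ w2.S).Nonempty) ∧ α ∈ w.S then c else 0)
      = if MulDef w1 w2 ∧ (w1.S ∩ w2.S).Nonempty ∧ α ∈ (wmul w1 w2).S then c else 0 := by
  have hrw : ∀ w : Word E,
      (if (MulDef w1 w2 ∧ wmul w1 w2 = w ∧ (w1.S ∩ w2.S).Nonempty) ∧ α ∈ w.S then c else 0)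
      = (if w = wmul w1 w2 then
          (if MulDef w1 w2 ∧ (w1.S ∩ w2.S).Nonempty ∧ α ∈ (wmul w1 w2).S then c else 0)
          else 0) := by
    intro w
    by_cases hw : w = wmul w1 w2
    · subst hw
      rw [if_pos rfl]
      exact if_congr (by tauto) rfl rfl
    · rw [if_neg hw, if_neg (fun h => hw h.1.2.1.symm)]
  rw [Finset.sum_congr rfl fun w _ => hrw w,
    Finset.sum_ite_eq' Finset.univ (wmul w1 w2), if_pos (Finset.mem_univ _)]

lemma pointwise_bound (A B : Word E → Op Λ) {ν' : ℝ} (h0 : 0 ≤ ν') (α : E) (w : Word E) :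
    (if α ∈ w.S then opNorm (collComm A B w) * Real.exp (ν' * w.S.card) else 0)
      ≤ ∑ w1 : Word E, ∑ w2 : Word E,
          (if (MulDef w1 w2 ∧ wmul w1 w2 = w ∧ (w1.S ∩ w2.S).Nonempty) ∧ α ∈ w.S
            then cfun A B ν' w1 w2 else 0) := by
  by_cases hα : α ∈ w.S
  · rw [if_pos hα]
    have hbase : opNorm (collComm A B w) ≤ ∑ w1 : Word E, ∑ w2 : Word E,
        (if MulDef w1 w2 ∧ wmul w1 w2 = w ∧ (w1.S ∩ w2.S).Nonempty
          then opNorm (A w1) * opNorm (B w2) + opNorm (B w1) * opNorm (A w2) else 0) := by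
      refine (opNorm_sum_le _ _).trans (Finset.sum_le_sum fun w1 _ => ?_)
      refine (opNorm_sum_le _ _).trans (Finset.sum_le_sum fun w2 _ => ?_)
      by_cases hc : MulDef w1 w2 ∧ wmul w1 w2 = w ∧ (w1.S ∩ w2.S).Nonempty
      · rw [if_pos hc, if_pos hc]
        exact (opNorm_sub_le _ _).trans (add_le_add (opNorm_mul_le _ _) (opNorm_mul_le _ _))
      · rw [if_neg hc, if_neg hc, opNorm_zero]
    have hmul := mul_le_mul_of_nonneg_right hbase (Real.exp_pos (ν' * (w.S.card:ℝ))).le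
    refine hmul.trans ?_
    rw [Finset.sum_mul]
    refine Finset.sum_le_sum fun w1 _ => ?_
    rw [Finset.sum_mul]
    refine Finset.sum_le_sum fun w2 _ => ?_
    by_cases hc : MulDef w1 w2 ∧ wmul w1 w2 = w ∧ (w1.S ∩ w2.S).Nonempty
    · rw [if_pos hc, if_pos ⟨hc, hα⟩]
      unfold cfun
      have hcard : (w.S.card : ℝ) ≤ (w1.S.card : ℝ) + (w2.S.card : ℝ) := by
        rw [← hc.2.1]
        exact_mod_cast wmul_S_card_le w1 w2
      have hexp : Real.exp (ν' * w.S.card)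
          ≤ Real.exp (ν' * w1.S.card) * Real.exp (ν' * w2.S.card) := by
        rw [← Real.exp_add, ← mul_add]
        exact Real.exp_le_exp.2 (mul_le_mul_of_nonneg_left hcard h0)
      have hco : (0:ℝ) ≤ opNorm (A w1) * opNorm (B w2) + opNorm (B w1) * opNorm (A w2) := by
        have := opNorm_nonneg (A w1); have := opNorm_nonneg (B w1)
        have := opNorm_nonneg (A w2); have := opNorm_nonneg (B w2)
        positivity
      exact mul_le_mul_of_nonneg_left hexp hco
    · rw [if_neg hc, if_neg (fun h => hc h.1), zero_mul]
  · rw [if_neg hα]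
    refine Finset.sum_nonneg fun w1 _ => Finset.sum_nonneg fun w2 _ => ?_
    by_cases hc : (MulDef w1 w2 ∧ wmul w1 w2 = w ∧ (w1.S ∩ w2.S).Nonempty) ∧ α ∈ w.S
    · rw [if_pos hc]; exact cfun_nonneg A B ν' w1 w2
    · rw [if_neg hc]

lemma Fn_collComm_le (A B : Word E → Op Λ) {ν' ν M : ℝ} (h0 : 0 ≤ ν') (hν : ν' < ν)
    (hM : ∀ t : ℕ, 1 ≤ t → (t:ℝ) * Real.exp (-((ν - ν') * t)) ≤ M) (α : E) :
    Fn ν' (collComm A B) α ≤ 4 * M * (wordNorm ν A * wordNorm ν B) := by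
  have step1 : Fn ν' (collComm A B) α ≤ ∑ w : Word E, ∑ w1 : Word E, ∑ w2 : Word E,
      (if (MulDef w1 w2 ∧ wmul w1 w2 = w ∧ (w1.S ∩ w2.S).Nonempty) ∧ α ∈ w.S
        then cfun A B ν' w1 w2 else 0) :=
    Finset.sum_le_sum fun w _ => pointwise_bound A B h0 α w
  have step2 : (∑ w : Word E, ∑ w1 : Word E, ∑ w2 : Word E,
      (if (MulDef w1 w2 ∧ wmul w1 w2 = w ∧ (w1.S ∩ w2.S).Nonempty) ∧ α ∈ w.S
        then cfun A B ν' w1 w2 else 0))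
      = ∑ w1 : Word E, ∑ w2 : Word E,
        (if MulDef w1 w2 ∧ (w1.S ∩ w2.S).Nonempty ∧ α ∈ (wmul w1 w2).S
          then cfun A B ν' w1 w2 else 0) := by
    rw [Finset.sum_comm]
    refine Finset.sum_congr rfl fun w1 _ => ?_
    rw [Finset.sum_comm]
    exact Finset.sum_congr rfl fun w2 _ => collapse w1 w2 α _
  rw [step2] at step1
  refine step1.trans ?_
  have step3 : ∀ w1 w2 : Word E,
      (if MulDef w1 w2 ∧ (w1.S ∩ w2.S).Nonempty ∧ α ∈ (wmul w1 w2).S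
        then cfun A B ν' w1 w2 else 0)
      ≤ (if α ∈ w1.S ∧ (w1.S ∩ w2.S).Nonempty then cfun A B ν' w1 w2 else 0)
        + (if α ∈ w2.S ∧ (w2.S ∩ w1.S).Nonempty then cfun A B ν' w1 w2 else 0) := by
    intro w1 w2
    refine ite_le_ite_add_ite (cfun_nonneg A B ν' w1 w2) fun hc => ?_
    rcases mem_or_of_mem_wmul_S hc.2.2 with h1 | h2
    · exact Or.inl ⟨h1, hc.2.1⟩
    · exact Or.inr ⟨h2, by rw [Finset.inter_comm]; exact hc.2.1⟩
  have hsplit := Finset.sum_le_sum fun w1 (_ : w1 ∈ Finset.univ) =>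
    Finset.sum_le_sum fun w2 (_ : w2 ∈ Finset.univ) => step3 w1 w2
  simp only [Finset.sum_add_distrib] at hsplit
  refine hsplit.trans ?_
  have hT1 := Tbound' A B h0 hν hM α
  have hT2 : ∑ w1 : Word E, ∑ w2 : Word E,
      (if α ∈ w2.S ∧ (w2.S ∩ w1.S).Nonempty then cfun A B ν' w1 w2 else 0)
      ≤ 2 * M * (wordNorm ν A * wordNorm ν B) := by
    rw [Finset.sum_comm]
    have hTB := Tbound' B A h0 hν hM α
    have hcomm : ∀ x y : Word E, cfun A B ν' y x = cfun B A ν' x y := by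
      intro x y; unfold cfun; ring
    calc ∑ x : Word E, ∑ y : Word E,
          (if α ∈ x.S ∧ (x.S ∩ y.S).Nonempty then cfun A B ν' y x else 0)
        = ∑ x : Word E, ∑ y : Word E,
          (if α ∈ x.S ∧ (x.S ∩ y.S).Nonempty then cfun B A ν' x y else 0) :=
          Finset.sum_congr rfl fun x _ => Finset.sum_congr rfl fun y _ => by rw [hcomm]
      _ ≤ 2 * M * (wordNorm ν B * wordNorm ν A) := hTB
      _ = 2 * M * (wordNorm ν A * wordNorm ν B) := by ring
  linarith

/-- The master single-commutator bound. -/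
lemma master (A B : Word E → Op Λ) {ν' ν M : ℝ} (h0 : 0 ≤ ν') (hν : ν' < ν)
    (hM : ∀ t : ℕ, 1 ≤ t → (t:ℝ) * Real.exp (-((ν - ν') * t)) ≤ M) :
    wordNorm ν' (collComm A B) ≤ 4 * M * (wordNorm ν A * wordNorm ν B) := by
  have hNA : 0 ≤ wordNorm ν A := wordNorm_nonneg' ν A
  have hNB : 0 ≤ wordNorm ν B := wordNorm_nonneg' ν B
  have hMpos : 0 ≤ M := by
    have h1 := hM 1 le_rfl
    rw [Nat.cast_one, one_mul] at h1
    have h2 := Real.exp_pos (-((ν - ν') * 1))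
    linarith
  refine wordNorm_le_of ?_ fun α => Fn_collComm_le A B h0 hν hM α
  have h4 : (0:ℝ) ≤ 4 * M := by linarith
  exact mul_nonneg h4 (mul_nonneg hNA hNB)

end AuxMaster

section AuxChain
variable {Λ E : Type} [Fintype Λ] [DecidableEq Λ] [Fintype E] [LinearOrder E]

lemma chain_bound (B1 B0 : Word E → Op Λ) {μ' μ : ℝ} (h0 : 0 ≤ μ') (hμ : μ' < μ)
    {k : ℕ} (hk : 1 ≤ k) :
    wordNorm μ' ((fun C => collComm B1 C)^[k] B0)
      ≤ wordNorm μ B0 * wordNorm μ B1 ^ k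
          * (16 / Real.exp 1 ^ 2 * ((k:ℝ) / (μ - μ')) ^ 2)
          * (4 / Real.exp 1 * ((k:ℝ) / (μ - μ'))) ^ (k - 1) := by
  have hδ : (0:ℝ) < μ - μ' := sub_pos.2 hμ
  have he : (0:ℝ) < Real.exp 1 := Real.exp_pos 1
  have hkR : (1:ℝ) ≤ (k:ℝ) := by exact_mod_cast hk
  have hk0 : (0:ℝ) < (k:ℝ) := by linarith
  have hδk : (0:ℝ) < (μ - μ') / k := by positivity
  have hN1 : 0 ≤ wordNorm μ B1 := wordNorm_nonneg' μ B1
  have hN0 : 0 ≤ wordNorm μ B0 := wordNorm_nonneg' μ B0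
  have key : ∀ j : ℕ, 1 ≤ j → j ≤ k →
      wordNorm (μ' + ((k:ℝ) - j) * ((μ - μ') / k)) ((fun C => collComm B1 C)^[j] B0)
        ≤ wordNorm μ B0 * wordNorm μ B1 ^ j
            * (16 / Real.exp 1 ^ 2 * ((k:ℝ) / (μ - μ')) ^ 2)
            * (4 / Real.exp 1 * ((k:ℝ) / (μ - μ'))) ^ (j - 1) := by
    intro j
    induction j with
    | zero => intro h; exact absurd h (by norm_num)
    | succ i ih =>
      intro _ hik
      have hikR : ((i:ℝ) + 1) ≤ (k:ℝ) := by exact_mod_cast hik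
      have hν'0 : 0 ≤ μ' + ((k:ℝ) - (i+1:ℕ)) * ((μ - μ') / k) := by
        push_cast
        have : (0:ℝ) ≤ ((k:ℝ) - ((i:ℝ)+1)) := by linarith
        positivity
      by_cases hi0 : i = 0
      · subst hi0
        -- base case j = 1
        have hd : μ - (μ' + ((k:ℝ) - (0+1:ℕ)) * ((μ - μ') / k)) = (μ - μ') / k := by
          push_cast; field_simp; ring
        have hν : μ' + ((k:ℝ) - (0+1:ℕ)) * ((μ - μ') / k) < μ := by
          have := hδk; linarith [hd]
        have hM : ∀ t : ℕ, 1 ≤ t →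
            (t:ℝ) * Real.exp (-((μ - (μ' + ((k:ℝ) - (0+1:ℕ)) * ((μ - μ') / k))) * t))
              ≤ 4 * (k:ℝ)^2 / (Real.exp 1 ^ 2 * (μ - μ')^2) := by
          intro t ht
          rw [hd]
          have htR : (1:ℝ) ≤ (t:ℝ) := by exact_mod_cast ht
          refine (factor_bound_two hδk htR).trans (le_of_eq ?_)
          field_simp
        have hm := master B1 B0 hν'0 hν hM
        rw [Function.iterate_one]
        refine hm.trans (le_of_eq ?_)
        simp only [pow_one, Nat.sub_self, pow_zero, mul_one]
        field_simp
        ring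
      · have h1i : 1 ≤ i := Nat.one_le_iff_ne_zero.2 hi0
        obtain ⟨m, rfl⟩ : ∃ m, i = m + 1 := ⟨i - 1, (Nat.succ_pred_eq_of_pos h1i).symm⟩
        have hikk : (m+1) ≤ k := le_trans (Nat.le_succ _) hik
        have Ri := ih h1i hikk
        have hd : (μ' + ((k:ℝ) - (m+1:ℕ)) * ((μ - μ') / k))
            - (μ' + ((k:ℝ) - (m+1+1:ℕ)) * ((μ - μ') / k)) = (μ - μ') / k := by
          push_cast; field_simp; try ring
        have hν : μ' + ((k:ℝ) - (m+1+1:ℕ)) * ((μ - μ') / k)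
            < μ' + ((k:ℝ) - (m+1:ℕ)) * ((μ - μ') / k) := by
          have := hδk; linarith [hd]
        have hM : ∀ t : ℕ, 1 ≤ t →
            (t:ℝ) * Real.exp (-(((μ' + ((k:ℝ) - (m+1:ℕ)) * ((μ - μ') / k))
              - (μ' + ((k:ℝ) - (m+1+1:ℕ)) * ((μ - μ') / k))) * t))
              ≤ (k:ℝ) / (Real.exp 1 * (μ - μ')) := by
          intro t ht
          rw [hd]
          refine (factor_bound_one hδk t).trans (le_of_eq ?_)
          field_simp
        have hm := master B1 ((fun C => collComm B1 C)^[m+1] B0) hν'0 hν hM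
        rw [Function.iterate_succ_apply']
        refine hm.trans ?_
        -- bound the two factors
        have hνle : μ' + ((k:ℝ) - (m+1:ℕ)) * ((μ - μ') / k) ≤ μ := by
          push_cast
          have h1 : ((k:ℝ) - ((m:ℝ)+1)) * ((μ - μ') / k) ≤ (k:ℝ) * ((μ - μ') / k) := by
            have : (0:ℝ) ≤ (μ - μ') / k := hδk.le
            have h2 : ((k:ℝ) - ((m:ℝ)+1)) ≤ (k:ℝ) := by linarith [Nat.cast_nonneg (α := ℝ) m]
            exact mul_le_mul_of_nonneg_right h2 this
          have h3 : (k:ℝ) * ((μ - μ') / k) = μ - μ' := by field_simp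
          linarith
        have hB1le : wordNorm (μ' + ((k:ℝ) - (m+1:ℕ)) * ((μ - μ') / k)) B1 ≤ wordNorm μ B1 :=
          wordNorm_mono hνle B1
        have hXj : 0 ≤ wordNorm (μ' + ((k:ℝ) - (m+1:ℕ)) * ((μ - μ') / k))
            ((fun C => collComm B1 C)^[m+1] B0) := wordNorm_nonneg' _ _
        have hprod : wordNorm (μ' + ((k:ℝ) - (m+1:ℕ)) * ((μ - μ') / k)) B1
              * wordNorm (μ' + ((k:ℝ) - (m+1:ℕ)) * ((μ - μ') / k))
                ((fun C => collComm B1 C)^[m+1] B0)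
            ≤ wordNorm μ B1 * (wordNorm μ B0 * wordNorm μ B1 ^ (m+1)
                * (16 / Real.exp 1 ^ 2 * ((k:ℝ) / (μ - μ')) ^ 2)
                * (4 / Real.exp 1 * ((k:ℝ) / (μ - μ'))) ^ (m+1-1)) :=
          mul_le_mul hB1le Ri hXj hN1
        have hMk : (0:ℝ) ≤ 4 * ((k:ℝ) / (Real.exp 1 * (μ - μ'))) := by positivity
        have step := mul_le_mul_of_nonneg_left hprod hMk
        refine step.trans (le_of_eq ?_)
        simp only [Nat.add_sub_cancel]
        have hF : 4 * ((k:ℝ) / (Real.exp 1 * (μ - μ'))) = 4 / Real.exp 1 * ((k:ℝ)/(μ - μ')) := by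
          field_simp
        rw [hF]
        ring
  have hfin := key k hk le_rfl
  have : μ' + ((k:ℝ) - (k:ℕ)) * ((μ - μ') / k) = μ' := by simp
  rwa [this] at hfin

end AuxChain

section AuxTerm

/-- Pure arithmetic part of the term bound. -/
lemma term_arith {N0 N1 d : ℝ} (hN0 : 0 ≤ N0) (hN1 : 0 ≤ N1) (hd : 0 < d)
    (hsm : 4 * Real.exp 1 * N1 ≤ d) (m : ℕ) :
    N0 * N1 ^ (m+1) * (16 / Real.exp 1 ^ 2 * (((m:ℝ) + 1) / d) ^ 2)
      * (4 / Real.exp 1 * (((m:ℝ) + 1) / d)) ^ m / ((m+1).factorial : ℝ)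
    ≤ 16 * (N0 * N1) / d ^ 2 * (((m:ℝ) + 1) * Real.exp (-((m:ℝ) + 1))) := by
  have he : (0:ℝ) < Real.exp 1 := Real.exp_pos 1
  set E1 := Real.exp 1 with hE1def
  have hm1 : (0:ℝ) < (m:ℝ) + 1 := by positivity
  have hfact : (0:ℝ) < ((m+1).factorial : ℝ) := by exact_mod_cast (m+1).factorial_pos
  have hek : Real.exp (-((m:ℝ) + 1)) = (E1 ^ (m+1))⁻¹ := by
    have hc : ((m:ℝ) + 1) = ((m+1:ℕ):ℝ) := by push_cast; ring
    rw [hc, Real.exp_neg, hE1def, ← Real.exp_nat_mul, mul_one]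
  have hGnn : 0 ≤ N1 * (4 / E1 * (((m:ℝ) + 1) / d)) := mul_nonneg hN1 (by positivity)
  have hGle : N1 * (4 / E1 * (((m:ℝ) + 1) / d)) ≤ ((m:ℝ) + 1) / E1 ^ 2 := by
    have hkey : N1 * (4 / E1 * (((m:ℝ) + 1) / d)) = 4 * N1 * ((m:ℝ) + 1) / (E1 * d) := by
      field_simp
      try ring
    rw [hkey, div_le_div_iff₀ (by positivity) (by positivity)]
    nlinarith [mul_le_mul_of_nonneg_left hsm (mul_nonneg hm1.le he.le), he, hm1]
  have hpow : (N1 * (4 / E1 * (((m:ℝ) + 1) / d))) ^ m ≤ (((m:ℝ) + 1) / E1 ^ 2) ^ m :=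
    pow_le_pow_left₀ hGnn hGle m
  have hrw1 : ∀ X : ℝ, N0 * N1 ^ (m+1) * (16 / E1 ^ 2 * X ^ 2) * (4 / E1 * X) ^ m
      = (N0 * N1 * (16 / E1 ^ 2 * X ^ 2)) * (N1 * (4 / E1 * X)) ^ m := by
    intro X
    rw [mul_pow]
    ring
  rw [hrw1 (((m:ℝ) + 1) / d)]
  have step2 : (N0 * N1 * (16 / E1 ^ 2 * (((m:ℝ) + 1) / d) ^ 2))
        * (N1 * (4 / E1 * (((m:ℝ) + 1) / d))) ^ m / ((m+1).factorial : ℝ)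
      ≤ (N0 * N1 * (16 / E1 ^ 2 * (((m:ℝ) + 1) / d) ^ 2))
        * ((((m:ℝ) + 1)) / E1 ^ 2) ^ m / ((m+1).factorial : ℝ) := by
    have hA : 0 ≤ N0 * N1 * (16 / E1 ^ 2 * (((m:ℝ) + 1) / d) ^ 2) :=
      mul_nonneg (mul_nonneg hN0 hN1) (by positivity)
    rw [div_eq_mul_inv, div_eq_mul_inv]
    exact mul_le_mul_of_nonneg_right (mul_le_mul_of_nonneg_left hpow hA) (by positivity)
  refine step2.trans ?_
  have hkk := pow_self_le_exp_factorial (m+1)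
  rw [← hE1def] at hkk
  have hcast : ((m+1:ℕ):ℝ) = (m:ℝ) + 1 := by push_cast; ring
  rw [hcast] at hkk
  have hcross : ((m:ℝ) + 1) ^ (m+2) * E1 ^ (m+1)
      ≤ ((m:ℝ) + 1) * (E1 ^ (m+1)) ^ 2 * ((m+1).factorial : ℝ) := by
    have h1 := mul_le_mul_of_nonneg_left hkk
      (by positivity : (0:ℝ) ≤ ((m:ℝ) + 1) * E1 ^ (m+1))
    calc ((m:ℝ) + 1) ^ (m+2) * E1 ^ (m+1)
        = ((m:ℝ) + 1) * E1 ^ (m+1) * ((m:ℝ) + 1) ^ (m+1) := by ring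
      _ ≤ ((m:ℝ) + 1) * E1 ^ (m+1) * (E1 ^ (m+1) * ((m+1).factorial : ℝ)) := h1
      _ = ((m:ℝ) + 1) * (E1 ^ (m+1)) ^ 2 * ((m+1).factorial : ℝ) := by ring
  rw [hek]
  have hEpos : (0:ℝ) < E1 ^ (m+1) := by positivity
  have hineq : ((m:ℝ) + 1) ^ (m+2) / ((E1 ^ (m+1)) ^ 2 * ((m+1).factorial : ℝ))
      ≤ ((m:ℝ) + 1) * (E1 ^ (m+1))⁻¹ := by
    have h2 : ((m:ℝ) + 1) ^ (m+2) ≤ ((m:ℝ) + 1) * E1 ^ (m+1) * ((m+1).factorial : ℝ) := by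
      nlinarith [hcross, hEpos]
    rw [div_le_iff₀ (by positivity)]
    have h3 : ((m:ℝ) + 1) * (E1 ^ (m+1))⁻¹ * ((E1 ^ (m+1)) ^ 2 * ((m+1).factorial : ℝ))
        = ((m:ℝ) + 1) * E1 ^ (m+1) * ((m+1).factorial : ℝ) := by
      field_simp
      try ring
    rw [h3]
    exact h2
  have hrw2 : (N0 * N1 * (16 / E1 ^ 2 * (((m:ℝ) + 1) / d) ^ 2))
        * ((((m:ℝ) + 1)) / E1 ^ 2) ^ m / ((m+1).factorial : ℝ)
      = (16 * (N0 * N1) / d ^ 2)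
        * (((m:ℝ) + 1) ^ (m+2) / ((E1 ^ (m+1)) ^ 2 * ((m+1).factorial : ℝ))) := by
    simp only [div_pow]
    field_simp
    ring
  rw [hrw2]
  exact mul_le_mul_of_nonneg_left hineq
    (by positivity : (0:ℝ) ≤ 16 * (N0 * N1) / d ^ 2)

variable {Λ E : Type} [Fintype Λ] [DecidableEq Λ] [Fintype E] [LinearOrder E]

lemma term_bound (B1 B0 : Word E → Op Λ) {μ' μ : ℝ} (h0 : 0 ≤ μ') (hμ : μ' < μ)
    (hsmall : 2 * Real.exp 1 * wordNorm μ B1 / (μ - μ') ≤ 1 / 2)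
    {k : ℕ} (hk : 1 ≤ k) :
    wordNorm μ' ((fun C => collComm B1 C)^[k] B0) / k.factorial
      ≤ 16 * (wordNorm μ B0 * wordNorm μ B1) / (μ - μ') ^ 2
          * ((k:ℝ) * Real.exp (-(k:ℝ))) := by
  have hN1 : 0 ≤ wordNorm μ B1 := wordNorm_nonneg' μ B1
  have hN0 : 0 ≤ wordNorm μ B0 := wordNorm_nonneg' μ B0
  have hδ : (0:ℝ) < μ - μ' := sub_pos.2 hμ
  have he : (0:ℝ) < Real.exp 1 := Real.exp_pos 1
  have hsm : 4 * Real.exp 1 * wordNorm μ B1 ≤ μ - μ' := by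
    rw [div_le_div_iff₀ hδ (by norm_num : (0:ℝ) < 2)] at hsmall
    linarith
  obtain ⟨m, rfl⟩ : ∃ m, k = m + 1 := ⟨k - 1, (Nat.succ_pred_eq_of_pos hk).symm⟩
  have hc := chain_bound B1 B0 h0 hμ hk
  simp only [Nat.add_sub_cancel] at hc
  have step1 : wordNorm μ' ((fun C => collComm B1 C)^[m+1] B0) / ((m+1).factorial : ℝ)
      ≤ (wordNorm μ B0 * wordNorm μ B1 ^ (m+1)
          * (16 / Real.exp 1 ^ 2 * (((m+1:ℕ):ℝ) / (μ - μ')) ^ 2)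
          * (4 / Real.exp 1 * (((m+1:ℕ):ℝ) / (μ - μ'))) ^ m) / ((m+1).factorial : ℝ) := by
    rw [div_eq_mul_inv, div_eq_mul_inv]
    exact mul_le_mul_of_nonneg_right hc (by positivity)
  refine step1.trans ?_
  have harith := term_arith hN0 hN1 hδ hsm m
  push_cast
  push_cast at harith
  exact harith

end AuxTerm

section AuxSeries

lemma exp_neg_one_lt_one : Real.exp (-1) < 1 := by
  have h := Real.exp_one_gt_d9
  rw [Real.exp_neg]
  rw [inv_lt_one_iff₀]
  right; linarith

lemma summable_ke : Summable (fun n : ℕ => (n:ℝ) * Real.exp (-(n:ℝ))) := by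
  have hr : ‖Real.exp (-1)‖ < 1 := by
    rw [Real.norm_eq_abs, abs_of_pos (Real.exp_pos _)]
    exact exp_neg_one_lt_one
  refine (summable_pow_mul_geometric_of_norm_lt_one 1 hr).congr fun n => ?_
  rw [← Real.exp_nat_mul]
  push_cast
  ring_nf

lemma tsum_ke_le : ∑' n : ℕ, (n:ℝ) * Real.exp (-(n:ℝ)) ≤ Real.exp 1 / 2 := by
  have hr : ‖Real.exp (-1)‖ < 1 := by
    rw [Real.norm_eq_abs, abs_of_pos (Real.exp_pos _)]
    exact exp_neg_one_lt_one
  have heq : ∑' n : ℕ, (n:ℝ) * Real.exp (-(n:ℝ))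
      = Real.exp (-1) / (1 - Real.exp (-1)) ^ 2 := by
    rw [← tsum_coe_mul_geometric_of_norm_lt_one hr]
    refine tsum_congr fun n => ?_
    rw [← Real.exp_nat_mul]
    push_cast
    ring_nf
  rw [heq]
  have h9 := Real.exp_one_gt_d9
  have hpos : (0:ℝ) < Real.exp 1 := Real.exp_pos 1
  have hinv : Real.exp (-1) = (Real.exp 1)⁻¹ := Real.exp_neg 1
  rw [hinv]
  rw [div_le_div_iff₀ (by nlinarith [exp_neg_one_lt_one, hinv]) (by norm_num)]
  have hii : (Real.exp 1)⁻¹ * Real.exp 1 = 1 := inv_mul_cancel₀ (ne_of_gt hpos)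
  have hsq : (1 - (Real.exp 1)⁻¹) ^ 2 = 1 - 2 * (Real.exp 1)⁻¹ + ((Real.exp 1)⁻¹) ^ 2 := by ring
  -- need 2 * (exp 1)⁻¹ ≤ exp 1 * (1 - (exp 1)⁻¹)^2, i.e. 2 ≤ e (e-1)^2 / e^2... nlinarith
  have hinv_pos : (0:ℝ) < (Real.exp 1)⁻¹ := by positivity
  nlinarith [hii, hinv_pos, h9, sq_nonneg (1 - (Real.exp 1)⁻¹), sq_nonneg ((Real.exp 1)⁻¹)]

end AuxSeries

section AuxTsum
variable {Λ : Type} [Fintype Λ] [DecidableEq Λ]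

/-- The matrix-to-CLM map as a continuous linear equivalence. -/
noncomputable def opCLE : Op Λ ≃L[ℂ]
    (EuclideanSpace ℂ (Λ → Fin 2) →L[ℂ] EuclideanSpace ℂ (Λ → Fin 2)) :=
  LinearEquiv.toContinuousLinearEquiv
    { toFun := Matrix.toEuclideanCLM (𝕜 := ℂ)
      invFun := (Matrix.toEuclideanCLM (𝕜 := ℂ)).symm
      map_add' := fun x y => map_add _ x y
      map_smul' := fun c x => map_smul _ c x
      left_inv := fun x => (Matrix.toEuclideanCLM (𝕜 := ℂ)).symm_apply_apply x
      right_inv := fun x => (Matrix.toEuclideanCLM (𝕜 := ℂ)).apply_symm_apply x }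

lemma opNorm_eq_opCLE (A : Op Λ) : opNorm A = ‖opCLE A‖ := rfl

lemma opNorm_tsum_le (t : ℕ → Op Λ) (h : Summable fun k => opNorm (t k)) :
    Summable t ∧ opNorm (∑' k, t k) ≤ ∑' k, opNorm (t k) := by
  have hnorm : Summable (fun k => ‖opCLE (t k)‖) := by
    refine h.congr fun k => ?_
    rw [opNorm_eq_opCLE]
  have hψ : Summable (fun k => opCLE (t k)) := Summable.of_norm hnorm
  have hsum_t : Summable t := by
    have hmap := hψ.map ((opCLE (Λ := Λ)).symm.toContinuousLinearMap.toLinearMap.toAddMonoidHom)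
      (opCLE (Λ := Λ)).symm.continuous
    refine hmap.congr fun k => ?_
    simp [Function.comp]
  refine ⟨hsum_t, ?_⟩
  have hmap2 : opCLE (∑' k, t k) = ∑' k, opCLE (t k) := by
    have h := ContinuousLinearMap.map_tsum
      ((opCLE (Λ := Λ)).toContinuousLinearMap) hsum_t
    simpa using h
  rw [opNorm_eq_opCLE, hmap2]
  refine (norm_tsum_le_tsum_norm hnorm).trans (le_of_eq ?_)
  exact tsum_congr fun k => (opNorm_eq_opCLE (t k)).symm

end AuxTsum
/-- **Norm bounds for the exponential of the adjoint action.**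
For operator-collections `B⁰, B¹` with `0 ≤ μ' < μ` and `2e‖B¹‖_μ/(μ−μ') ≤ 1/2`, one has
`‖exp(i ad_{B¹})(B⁰) − B⁰‖_{μ'} ≤ 8e(μ−μ')⁻²‖B⁰‖_μ‖B¹‖_μ` and consequently
`‖exp(i ad_{B¹})(B⁰)‖_{μ'} ≤ ‖B⁰‖_μ(1 + 8e‖B¹‖_μ(μ−μ')⁻²)`. -/
theorem exp_ad_bound {Λ E : Type} [Fintype Λ] [DecidableEq Λ] [Fintype E]
    [LinearOrder E] (K : Checks Λ E) (B0 B1 : Word E → Op Λ)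
    (h0 : IsColl K B0) (h1 : IsColl K B1)
    (μ' μ : ℝ) (hμ0 : 0 ≤ μ') (hμ : μ' < μ)
    (hsmall : 2 * Real.exp 1 * wordNorm μ B1 / (μ - μ') ≤ 1 / 2) :
    wordNorm μ' (fun w => expAd B1 B0 w - B0 w) ≤
        8 * Real.exp 1 / (μ - μ') ^ 2 * (wordNorm μ B0 * wordNorm μ B1) ∧
      wordNorm μ' (expAd B1 B0) ≤
        wordNorm μ B0 * (1 + 8 * Real.exp 1 * wordNorm μ B1 / (μ - μ') ^ 2) := by
  classical
  have hδ : (0:ℝ) < μ - μ' := sub_pos.2 hμ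
  have hN0 : 0 ≤ wordNorm μ B0 := wordNorm_nonneg' μ B0
  have hN1 : 0 ≤ wordNorm μ B1 := wordNorm_nonneg' μ B1
  have he : (0:ℝ) < Real.exp 1 := Real.exp_pos 1
  set It : ℕ → Word E → Op Λ := fun k => (fun C => collComm B1 C)^[k] B0 with hIt
  set T : ℕ → Word E → Op Λ :=
    fun k w => (Complex.I ^ k / (k.factorial : ℂ)) • It k w with hT
  have hTnorm : ∀ k w, opNorm (T k w) = opNorm (It k w) / k.factorial := by
    intro k w
    simp only [hT]
    rw [opNorm_smul, norm_div, norm_pow, Complex.norm_I, one_pow, Complex.norm_natCast,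
      div_mul_eq_mul_div, one_mul]
  have hItle : ∀ k, 1 ≤ k → ∀ w, opNorm (It k w) ≤ wordNorm μ' (It k) := by
    intro k hk w
    by_cases hS : w.S = ∅
    · obtain ⟨m, rfl⟩ : ∃ m, k = m + 1 := ⟨k - 1, (Nat.succ_pred_eq_of_pos hk).symm⟩
      have hz : It (m+1) w = 0 := by
        simp only [hIt]
        rw [Function.iterate_succ_apply']
        exact collComm_eq_zero_of_S_empty _ _ hS
      rw [hz, opNorm_zero]
      exact wordNorm_nonneg' _ _
    · exact opNorm_le_wordNorm hμ0 _ (Finset.nonempty_iff_ne_empty.2 hS)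
  set K : ℝ := 16 * (wordNorm μ B0 * wordNorm μ B1) / (μ - μ') ^ 2 with hK
  have hKnn : 0 ≤ K := by
    rw [hK]
    exact div_nonneg (by nlinarith [mul_nonneg hN0 hN1]) (by positivity)
  have htb : ∀ k : ℕ, 1 ≤ k →
      wordNorm μ' (It k) / k.factorial ≤ K * ((k:ℝ) * Real.exp (-(k:ℝ))) := by
    intro k hk
    rw [hK, hIt]
    exact term_bound B1 B0 hμ0 hμ hsmall hk
  have hTwle : ∀ (k : ℕ) (w : Word E),
      opNorm (T (k+1) w) ≤ K * (((k+1:ℕ):ℝ) * Real.exp (-((k+1:ℕ):ℝ))) := by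
    intro k w
    rw [hTnorm]
    refine le_trans ?_ (htb (k+1) (Nat.le_add_left 1 k))
    have := hItle (k+1) (Nat.le_add_left 1 k) w
    gcongr
  have hgeom : Summable (fun n : ℕ => (n:ℝ) * Real.exp (-(n:ℝ))) := summable_ke
  have hgeom1 : Summable (fun k : ℕ => (((k+1:ℕ):ℝ) * Real.exp (-((k+1:ℕ):ℝ)))) := by
    have := (summable_nat_add_iff (f := fun n : ℕ => (n:ℝ) * Real.exp (-(n:ℝ))) 1).2 hgeom
    exact this
  have hmaj : Summable (fun k : ℕ => K * (((k+1:ℕ):ℝ) * Real.exp (-((k+1:ℕ):ℝ)))) :=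
    hgeom1.mul_left K
  have hperw : ∀ w : Word E, Summable (fun k => T (k+1) w) ∧
      opNorm (∑' k, T (k+1) w) ≤ ∑' k, opNorm (T (k+1) w) := by
    intro w
    refine opNorm_tsum_le _ ?_
    exact Summable.of_nonneg_of_le (fun k => opNorm_nonneg _) (fun k => hTwle k w) hmaj
  have hsumnorm : ∀ w : Word E, Summable (fun k => opNorm (T (k+1) w)) := fun w =>
    Summable.of_nonneg_of_le (fun k => opNorm_nonneg _) (fun k => hTwle k w) hmaj
  have hdiff : ∀ w, expAd B1 B0 w - B0 w = ∑' k, T (k+1) w := by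
    intro w
    have hsumT : Summable (fun k => T k w) :=
      (summable_nat_add_iff (f := fun k => T k w) 1).1 (hperw w).1
    have h0eq : T 0 w = B0 w := by
      rw [hT]
      simp [hIt]
    have hz := Summable.tsum_eq_zero_add hsumT
    have hexp : expAd B1 B0 w = ∑' k, T k w := rfl
    rw [hexp, hz, h0eq, add_sub_cancel_left]
  -- the Fn bound for the difference
  have hFnT : ∀ (j : ℕ), 1 ≤ j → ∀ α, Fn μ' (T j) α ≤ K * ((j:ℝ) * Real.exp (-(j:ℝ))) := by
    intro j hj α
    have hFneq : Fn μ' (T j) α = Fn μ' (It j) α / j.factorial := by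
      simp only [Fn]
      rw [Finset.sum_div]
      refine Finset.sum_congr rfl fun w _ => ?_
      by_cases hw : α ∈ w.S
      · rw [if_pos hw, if_pos hw, hTnorm, div_mul_eq_mul_div]
      · rw [if_neg hw, if_neg hw, zero_div]
    rw [hFneq]
    refine le_trans ?_ (htb j hj)
    rw [div_eq_mul_inv, div_eq_mul_inv]
    have hfj : (0:ℝ) < (j.factorial : ℝ) := by exact_mod_cast j.factorial_pos
    exact mul_le_mul_of_nonneg_right (Fn_le_wordNorm μ' (It j) α) (by positivity)
  have hFn : ∀ α, Fn μ' (fun w => expAd B1 B0 w - B0 w) α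
      ≤ 8 * Real.exp 1 / (μ - μ') ^ 2 * (wordNorm μ B0 * wordNorm μ B1) := by
    intro α
    have hterm : ∀ w : Word E,
        (if α ∈ w.S then opNorm (expAd B1 B0 w - B0 w) * Real.exp (μ' * w.S.card) else 0)
          ≤ ∑' k, (if α ∈ w.S then opNorm (T (k+1) w) * Real.exp (μ' * w.S.card) else 0) := by
      intro w
      by_cases hw : α ∈ w.S
      · rw [if_pos hw]
        have h1 : opNorm (expAd B1 B0 w - B0 w) ≤ ∑' k, opNorm (T (k+1) w) := by
          rw [hdiff w]; exact (hperw w).2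
        have h2 : opNorm (expAd B1 B0 w - B0 w) * Real.exp (μ' * w.S.card)
            ≤ (∑' k, opNorm (T (k+1) w)) * Real.exp (μ' * w.S.card) :=
          mul_le_mul_of_nonneg_right h1 (Real.exp_pos _).le
        refine h2.trans (le_of_eq ?_)
        rw [← tsum_mul_right]
        exact tsum_congr fun k => by rw [if_pos hw]
      · rw [if_neg hw]
        refine le_of_eq ?_
        rw [tsum_congr fun k => (if_neg hw : _ = (0:ℝ))]
        exact tsum_zero.symm
    have hstep1 : Fn μ' (fun w => expAd B1 B0 w - B0 w) α
        ≤ ∑ w : Word E, ∑' k,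
            (if α ∈ w.S then opNorm (T (k+1) w) * Real.exp (μ' * w.S.card) else 0) :=
      Finset.sum_le_sum fun w _ => hterm w
    have hsumF : ∀ w : Word E, Summable (fun k =>
        (if α ∈ w.S then opNorm (T (k+1) w) * Real.exp (μ' * w.S.card) else 0)) := by
      intro w
      by_cases hw : α ∈ w.S
      · refine ((hsumnorm w).mul_right (Real.exp (μ' * w.S.card))).congr fun k => ?_
        rw [if_pos hw]
      · refine summable_zero.congr fun k => ?_
        rw [if_neg hw]
    have hswap : (∑ w : Word E, ∑' k,
          (if α ∈ w.S then opNorm (T (k+1) w) * Real.exp (μ' * w.S.card) else 0))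
        = ∑' k, ∑ w : Word E,
          (if α ∈ w.S then opNorm (T (k+1) w) * Real.exp (μ' * w.S.card) else 0) :=
      (Summable.tsum_finsetSum fun w _ => hsumF w).symm
    rw [hswap] at hstep1
    refine hstep1.trans ?_
    have hFnid : ∀ k : ℕ, (∑ w : Word E,
        (if α ∈ w.S then opNorm (T (k+1) w) * Real.exp (μ' * w.S.card) else 0))
        = Fn μ' (T (k+1)) α := fun k => rfl
    have hsum2 : Summable (fun k : ℕ => Fn μ' (T (k+1)) α) :=
      Summable.of_nonneg_of_le (fun k => Fn_nonneg _ _ _)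
        (fun k => hFnT (k+1) (Nat.le_add_left 1 k) α) hmaj
    have hle2 : (∑' k, ∑ w : Word E,
          (if α ∈ w.S then opNorm (T (k+1) w) * Real.exp (μ' * w.S.card) else 0))
        ≤ ∑' k : ℕ, K * (((k+1:ℕ):ℝ) * Real.exp (-((k+1:ℕ):ℝ))) := by
      refine Summable.tsum_le_tsum ?_ ?_ hmaj
      · intro k
        rw [hFnid k]
        exact hFnT (k+1) (Nat.le_add_left 1 k) α
      · refine Summable.congr hsum2 fun k => (hFnid k).symm
    refine hle2.trans ?_
    rw [tsum_mul_left]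
    have htail : (∑' k : ℕ, (((k+1:ℕ):ℝ) * Real.exp (-((k+1:ℕ):ℝ))))
        ≤ Real.exp 1 / 2 := by
      have hz := Summable.tsum_eq_zero_add hgeom
      have : (∑' n : ℕ, (n:ℝ) * Real.exp (-(n:ℝ)))
          = ∑' k : ℕ, (((k+1:ℕ):ℝ) * Real.exp (-((k+1:ℕ):ℝ))) := by
        rw [hz]
        push_cast
        simp
      rw [← this]
      exact tsum_ke_le
    calc K * (∑' k : ℕ, (((k+1:ℕ):ℝ) * Real.exp (-((k+1:ℕ):ℝ))))
        ≤ K * (Real.exp 1 / 2) := mul_le_mul_of_nonneg_left htail hKnn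
      _ = 8 * Real.exp 1 / (μ - μ') ^ 2 * (wordNorm μ B0 * wordNorm μ B1) := by
          rw [hK]; ring
  have part1 : wordNorm μ' (fun w => expAd B1 B0 w - B0 w)
      ≤ 8 * Real.exp 1 / (μ - μ') ^ 2 * (wordNorm μ B0 * wordNorm μ B1) :=
    wordNorm_le_of (mul_nonneg (by positivity) (mul_nonneg hN0 hN1)) hFn
  refine ⟨part1, ?_⟩
  have hfun : expAd B1 B0 = fun w => (expAd B1 B0 w - B0 w) + B0 w := by
    funext w
    rw [sub_add_cancel]
  rw [hfun]
  refine (wordNorm_add_le μ' _ B0).trans ?_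
  have hB0 : wordNorm μ' B0 ≤ wordNorm μ B0 := wordNorm_mono hμ.le B0
  have : 8 * Real.exp 1 / (μ - μ') ^ 2 * (wordNorm μ B0 * wordNorm μ B1) + wordNorm μ B0
      = wordNorm μ B0 * (1 + 8 * Real.exp 1 * wordNorm μ B1 / (μ - μ') ^ 2) := by
    field_simp
    ring
  linarith [part1]

end QLDPC
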